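/- arXiv:2301.12083 — 2 statements merged into one kernel-verified Lean document; each statement's English description precedes it below -/
import Mathlib

section
/- For any nonnegative real numbers a_1, ..., a_n, the sum over i of a_i / sqrt(sum over j ≤ i of a_j) is at most 2 * sqrt(sum over i of a_i), where terms with zero denominator are interpreted as 0. -/
open Finset Real

lemma aux_step (s t : ℝ) (hs : 0 ≤ s) (hst : s ≤ t) :
    (t - s) / Real.sqrt t ≤ 2 * (Real.sqrt t - Real.sqrt s) := by
  rcases eq_or_lt_of_le (hs.trans hst) with h | h
  · have ht : t = 0 := h.symm
    have hs0 : s = 0 := le_antisymm (ht ▸ hst) hs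
    simp [ht, hs0]
  · have hts : Real.sqrt t > 0 := Real.sqrt_pos.2 h
    rw [div_le_iff₀ hts]
    have h1 : Real.sqrt s ≤ Real.sqrt t := Real.sqrt_le_sqrt hst
    nlinarith [Real.sq_sqrt hs, Real.sq_sqrt (hs.trans hst), Real.sqrt_nonneg s]

lemma aux_nat (b : ℕ → ℝ) (hb : ∀ i, 0 ≤ b i) (n : ℕ) :
    ∑ i ∈ range n, b i / Real.sqrt (∑ j ∈ range (i + 1), b j) ≤
      2 * Real.sqrt (∑ i ∈ range n, b i) := by
  induction n with
  | zero => simp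
  | succ n ih =>
    rw [Finset.sum_range_succ, Finset.sum_range_succ (f := b)]
    have hS : 0 ≤ ∑ i ∈ range n, b i := Finset.sum_nonneg fun i _ => hb i
    have hS' : ∑ i ∈ range n, b i ≤ ∑ i ∈ range n, b i + b n := by
      linarith [hb n]
    have key := aux_step (∑ i ∈ range n, b i) (∑ i ∈ range n, b i + b n) hS hS'
    have : b n / Real.sqrt (∑ i ∈ range n, b i + b n) ≤
        2 * (Real.sqrt (∑ i ∈ range n, b i + b n) - Real.sqrt (∑ i ∈ range n, b i)) := by
      simpa using key
    linarith

theorem stmt_0 (n : ℕ) (a : Fin n → ℝ) (ha : ∀ i, 0 ≤ a i) :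
    ∑ i, a i / Real.sqrt (∑ j ∈ Finset.Iic i, a j) ≤
      2 * Real.sqrt (∑ i, a i) := by
  set b : ℕ → ℝ := fun j => if h : j < n then a ⟨j, h⟩ else 0 with hb
  have hbnn : ∀ i, 0 ≤ b i := by
    intro i; simp only [hb]; split
    · exact ha _
    · exact le_refl 0
  have hsum : ∀ i : Fin n, ∑ j ∈ Finset.Iic i, a j = ∑ j ∈ range (i.val + 1), b j := by
    intro i
    rw [show range (i.val + 1) = Finset.Iic (i : ℕ) by ext x; simp [Nat.lt_succ_iff]]
    rw [← Fin.map_valEmbedding_Iic, Finset.sum_map]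
    refine Finset.sum_congr rfl fun x hx => ?_
    simp only [Fin.valEmbedding_apply, hb]
    rw [dif_pos x.isLt]
  have htot : ∑ i, a i = ∑ i ∈ range n, b i := by
    rw [← Fin.sum_univ_eq_sum_range]
    refine Finset.sum_congr rfl fun x _ => ?_
    simp only [hb]
    rw [dif_pos x.isLt]
  calc ∑ i, a i / Real.sqrt (∑ j ∈ Finset.Iic i, a j)
      = ∑ i ∈ range n, b i / Real.sqrt (∑ j ∈ range (i + 1), b j) := by
        rw [← Fin.sum_univ_eq_sum_range]
        refine Finset.sum_congr rfl fun x _ => ?_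
        rw [hsum x]
        congr 1
        simp only [hb]; rw [dif_pos x.isLt]
    _ ≤ 2 * Real.sqrt (∑ i ∈ range n, b i) := aux_nat b hbnn n
    _ = 2 * Real.sqrt (∑ i, a i) := by rw [htot]
end

section
/- Let J ~ Geom(1/2) with P(J = j) = 2^{-j}, let j_max ≥ 1, and let (X_j) be random vectors in ℝ^d with ‖X_j‖ ≤ G almost surely for all j. Suppose there is a constant V ≥ 0 such that E[‖X_j − μ‖²] ≤ V/2^j for all 0 ≤ j ≤ j_max and some fixed vector μ with ‖μ‖ ≤ G. Define X = X_0 + 2^J (X_J − X_{J−1}) if J ≤ j_max, and X = X_0 otherwise, with J independent of (X_j). Then E[‖X‖²] ≤ 2G² + 8·j_max·V. -/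
open MeasureTheory ProbabilityTheory
open Fin.NatCast

local notation "⟪" x ", " y "⟫" => @inner ℝ _ _ x y

private lemma telescope_sum {M : Type*} [AddCommGroup M] (f : ℕ → M) (n : ℕ) :
    ∑ j ∈ Finset.Icc 1 n, (f j - f (j - 1)) = f n - f 0 := by
  induction n with
  | zero => simp
  | succ n ih =>
    rw [Finset.sum_Icc_succ_top (by omega), ih]
    simp only [Nat.add_sub_cancel]
    abel

private lemma int_bdd {Ω : Type*} [MeasurableSpace Ω] {μ : Measure Ω} [IsFiniteMeasure μ]
    {f : Ω → ℝ} (hf : Measurable f) {C : ℝ} (h : ∀ ω, |f ω| ≤ C) : Integrable f μ :=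
  (integrable_const C).mono' hf.aestronglyMeasurable
    (Filter.Eventually.of_forall fun ω => by simpa [Real.norm_eq_abs] using h ω)

set_option maxHeartbeats 1000000 in
theorem stmt_6 {Ω : Type*} [MeasurableSpace Ω] (μ : Measure Ω) [IsProbabilityMeasure μ]
    {d : ℕ} (J : Ω → ℕ) (hJmeas : Measurable J) (hJ1 : ∀ ω, 1 ≤ J ω)
    (hJdist : ∀ j : ℕ, 1 ≤ j → μ {ω | J ω = j} = ENNReal.ofReal ((2 : ℝ)⁻¹ ^ j))
    (jmax : ℕ) (hjmax : 1 ≤ jmax)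
    (X : ℕ → Ω → EuclideanSpace ℝ (Fin d))
    (hXmeas : ∀ j, Measurable (X j))
    (G : ℝ) (hG : 0 ≤ G) (hXbd : ∀ j ω, ‖X j ω‖ ≤ G)
    (V : ℝ) (hV : 0 ≤ V) (μvec : EuclideanSpace ℝ (Fin d)) (hμvec : ‖μvec‖ ≤ G)
    (hvar : ∀ j : ℕ, j ≤ jmax → ∫ ω, ‖X j ω - μvec‖ ^ 2 ∂μ ≤ V / 2 ^ j)
    (hindep : IndepFun J (fun ω => fun j : Fin (jmax + 1) => X j ω) μ) :
    ∫ ω, ‖X 0 ω +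
        (if J ω ≤ jmax then (2 : ℝ) ^ (J ω) • (X (J ω) ω - X (J ω - 1) ω) else 0)‖ ^ 2 ∂μ
      ≤ 2 * G ^ 2 + 8 * jmax * V := by
  classical
  set W : Ω → Fin (jmax + 1) → EuclideanSpace ℝ (Fin d) :=
    fun ω => fun j : Fin (jmax + 1) => X j ω with hWdef
  have hWmeas : Measurable W := by
    rw [hWdef]; exact measurable_pi_lambda _ fun i => hXmeas i
  -- general integrability helpers
  have hsqint : ∀ (Y : Ω → EuclideanSpace ℝ (Fin d)) (B : ℝ), Measurable Y →
      (∀ ω, ‖Y ω‖ ≤ B) → Integrable (fun ω => ‖Y ω‖ ^ 2) μ := by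
    intro Y B hY hB
    refine int_bdd (hY.norm.pow_const 2) (C := B ^ 2) fun ω => ?_
    rw [abs_of_nonneg (by positivity)]
    exact pow_le_pow_left₀ (norm_nonneg _) (hB ω) 2
  have hinint : ∀ (Y Z : Ω → EuclideanSpace ℝ (Fin d)) (BY BZ : ℝ), Measurable Y →
      Measurable Z → (∀ ω, ‖Y ω‖ ≤ BY) → (∀ ω, ‖Z ω‖ ≤ BZ) →
      Integrable (fun ω => ⟪Y ω, Z ω⟫) μ := by
    intro Y Z BY BZ hY hZ hBY hBZ
    refine int_bdd (hY.inner hZ) (C := BY * BZ) fun ω => ?_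
    calc |⟪Y ω, Z ω⟫| ≤ ‖Y ω‖ * ‖Z ω‖ := abs_real_inner_le_norm _ _
      _ ≤ BY * BZ :=
          mul_le_mul (hBY ω) (hBZ ω) (norm_nonneg _) ((norm_nonneg _).trans (hBY ω))
  -- difference bounds
  have hΔbd : ∀ j ω, ‖X j ω - X (j - 1) ω‖ ≤ 2 * G := by
    intro j ω
    calc ‖X j ω - X (j - 1) ω‖ ≤ ‖X j ω‖ + ‖X (j - 1) ω‖ := norm_sub_le _ _
      _ ≤ 2 * G := by have := hXbd j ω; have := hXbd (j - 1) ω; linarith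
  -- the basic integrals
  set I0 : ℝ := ∫ ω, ‖X 0 ω‖ ^ 2 ∂μ with hI0def
  set C : ℕ → ℝ := fun j => ∫ ω, ⟪X 0 ω, X j ω - X (j - 1) ω⟫ ∂μ with hCdef
  set D : ℕ → ℝ := fun j => ∫ ω, ‖X j ω - X (j - 1) ω‖ ^ 2 ∂μ with hDdef
  have hI0int : Integrable (fun ω => ‖X 0 ω‖ ^ 2) μ := hsqint _ G (hXmeas 0) (hXbd 0)
  have hCint : ∀ j, Integrable (fun ω => ⟪X 0 ω, X j ω - X (j - 1) ω⟫) μ := fun j =>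
    hinint _ _ G (2 * G) (hXmeas 0) ((hXmeas j).sub (hXmeas (j - 1))) (hXbd 0) (hΔbd j)
  have hDint : ∀ j, Integrable (fun ω => ‖X j ω - X (j - 1) ω‖ ^ 2) μ := fun j =>
    hsqint _ (2 * G) ((hXmeas j).sub (hXmeas (j - 1))) (hΔbd j)
  -- the functions of W
  set g : ℕ → (Fin (jmax + 1) → EuclideanSpace ℝ (Fin d)) → ℝ :=
    fun j v => ‖v 0 + (2 : ℝ) ^ j • (v (j : ℕ) - v ((j - 1 : ℕ)))‖ ^ 2 with hgdef
  set g0 : (Fin (jmax + 1) → EuclideanSpace ℝ (Fin d)) → ℝ := fun v => ‖v 0‖ ^ 2 with hg0def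
  have hgmeas : ∀ j, Measurable (g j) := by
    intro j
    rw [hgdef]
    fun_prop
  have hg0meas : Measurable g0 := by
    rw [hg0def]
    fun_prop
  have hWbd : ∀ ω (i : Fin (jmax + 1)), ‖W ω i‖ ≤ G := by
    intro ω i; simp only [hWdef]; exact hXbd _ _
  have hW0 : ∀ ω, W ω 0 = X 0 ω := by
    intro ω; simp [hWdef]
  have hWval : ∀ (j : ℕ), j ≤ jmax → ∀ ω, W ω ((j : ℕ) : Fin (jmax + 1)) = X j ω := by
    intro j hj ω
    simp only [hWdef]
    rw [Fin.val_cast_of_lt (show j < jmax + 1 by omega)]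
  have hgW : ∀ (j : ℕ), 1 ≤ j → j ≤ jmax → ∀ ω,
      g j (W ω) = ‖X 0 ω + (2 : ℝ) ^ j • (X j ω - X (j - 1) ω)‖ ^ 2 := by
    intro j h1 h2 ω
    simp only [hgdef]
    rw [hW0, hWval j h2, hWval (j - 1) (by omega)]
  have hg0W : ∀ ω, g0 (W ω) = ‖X 0 ω‖ ^ 2 := by
    intro ω; simp only [hg0def]; rw [hW0]
  have hgWbd : ∀ (j : ℕ) (ω : Ω), |g j (W ω)| ≤ (G + 2 ^ j * (2 * G)) ^ 2 := by
    intro j ω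
    have h2j : (0:ℝ) ≤ 2 ^ j := by positivity
    have hd2 : ‖W ω ((j : ℕ) : Fin (jmax + 1)) - W ω (((j - 1 : ℕ)) : Fin (jmax + 1))‖
        ≤ 2 * G := by
      have ha := hWbd ω ((j : ℕ) : Fin (jmax + 1))
      have hb := hWbd ω (((j - 1 : ℕ)) : Fin (jmax + 1))
      calc ‖W ω ((j : ℕ) : Fin (jmax + 1)) - W ω (((j - 1 : ℕ)) : Fin (jmax + 1))‖
          ≤ ‖W ω ((j : ℕ) : Fin (jmax + 1))‖ + ‖W ω (((j - 1 : ℕ)) : Fin (jmax + 1))‖ :=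
            norm_sub_le _ _
        _ ≤ 2 * G := by linarith
    have hb : ‖W ω 0 + (2 : ℝ) ^ j • (W ω ((j : ℕ) : Fin (jmax + 1))
        - W ω (((j - 1 : ℕ)) : Fin (jmax + 1)))‖ ≤ G + 2 ^ j * (2 * G) := by
      have h0 := hWbd ω 0
      have hs : ‖(2 : ℝ) ^ j • (W ω ((j : ℕ) : Fin (jmax + 1))
          - W ω (((j - 1 : ℕ)) : Fin (jmax + 1)))‖
          = 2 ^ j * ‖W ω ((j : ℕ) : Fin (jmax + 1)) - W ω (((j - 1 : ℕ)) : Fin (jmax + 1))‖ := by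
        rw [norm_smul, Real.norm_eq_abs, abs_of_nonneg h2j]
      have hmul := mul_le_mul_of_nonneg_left hd2 h2j
      calc ‖W ω 0 + (2 : ℝ) ^ j • (W ω ((j : ℕ) : Fin (jmax + 1))
          - W ω (((j - 1 : ℕ)) : Fin (jmax + 1)))‖
          ≤ ‖W ω 0‖ + ‖(2 : ℝ) ^ j • (W ω ((j : ℕ) : Fin (jmax + 1))
            - W ω (((j - 1 : ℕ)) : Fin (jmax + 1)))‖ := norm_add_le _ _
        _ ≤ G + 2 ^ j * (2 * G) := by rw [hs]; linarith
    have hgval : g j (W ω) = ‖W ω 0 + (2 : ℝ) ^ j • (W ω ((j : ℕ) : Fin (jmax + 1))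
        - W ω (((j - 1 : ℕ)) : Fin (jmax + 1)))‖ ^ 2 := by
      simp only [hgdef]
    rw [hgval, abs_of_nonneg (by positivity)]
    exact pow_le_pow_left₀ (norm_nonneg _) hb 2
  have hgWint : ∀ j, Integrable (fun ω => g j (W ω)) μ := fun j =>
    int_bdd ((hgmeas j).comp hWmeas) (hgWbd j)
  have hg0Wbd : ∀ ω, |g0 (W ω)| ≤ G ^ 2 := by
    intro ω
    rw [hg0W, abs_of_nonneg (by positivity)]
    exact pow_le_pow_left₀ (norm_nonneg _) (hXbd 0 ω) 2
  have hg0Wint : Integrable (fun ω => g0 (W ω)) μ :=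
    int_bdd (hg0meas.comp hWmeas) hg0Wbd
  -- key independence identity
  have key : ∀ (s : Set ℕ) (h : (Fin (jmax + 1) → EuclideanSpace ℝ (Fin d)) → ℝ),
      Measurable h → Integrable (fun ω => h (W ω)) μ →
      ∫ ω, s.indicator (fun _ => (1 : ℝ)) (J ω) * h (W ω) ∂μ
        = (μ (J ⁻¹' s)).toReal * ∫ ω, h (W ω) ∂μ := by
    intro s h hh hhint
    have hms : MeasurableSet s := s.to_countable.measurableSet
    have hiind : IndepFun ((s.indicator fun _ => (1 : ℝ)) ∘ J) (h ∘ W) μ :=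
      hindep.comp (measurable_const.indicator hms) hh
    have hmul := hiind.integral_mul_eq_mul_integral
      ((measurable_const.indicator hms).comp hJmeas).aestronglyMeasurable
      (hh.comp hWmeas).aestronglyMeasurable
    have hind_eq : ((s.indicator fun _ => (1 : ℝ)) ∘ J)
        = (J ⁻¹' s).indicator fun _ => (1 : ℝ) := by
      funext ω; by_cases hmem : J ω ∈ s <;> simp [Set.indicator, hmem, Function.comp]
    have hindval : ∫ ω, ((s.indicator fun _ => (1 : ℝ)) ∘ J) ω ∂μ = (μ (J ⁻¹' s)).toReal := by
      rw [hind_eq, integral_indicator_const (1 : ℝ) (hJmeas hms)]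
      simp [Measure.real]
    calc ∫ ω, s.indicator (fun _ => (1 : ℝ)) (J ω) * h (W ω) ∂μ
        = ∫ ω, (((s.indicator fun _ => (1 : ℝ)) ∘ J) * (h ∘ W)) ω ∂μ := rfl
      _ = (μ (J ⁻¹' s)).toReal * ∫ ω, h (W ω) ∂μ := by rw [hmul, hindval]; rfl
  -- probabilities
  set p : ℕ → ℝ := fun j => (2 : ℝ)⁻¹ ^ j with hpdef
  have hμj : ∀ j : ℕ, 1 ≤ j → (μ (J ⁻¹' {j})).toReal = p j := by
    intro j hj
    have hpre : J ⁻¹' {j} = {ω | J ω = j} := rfl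
    rw [hpre, hJdist j hj, ENNReal.toReal_ofReal (by positivity), hpdef]
  have hp2 : ∀ j : ℕ, p j * 2 ^ j = 1 := by
    intro j
    simp only [hpdef, ← mul_pow]
    norm_num
  -- pointwise decomposition of the integrand
  have hdecomp : ∀ ω, ‖X 0 ω +
      (if J ω ≤ jmax then (2 : ℝ) ^ (J ω) • (X (J ω) ω - X (J ω - 1) ω) else 0)‖ ^ 2
      = (∑ j ∈ Finset.Icc 1 jmax, ({j} : Set ℕ).indicator (fun _ => (1 : ℝ)) (J ω) * g j (W ω))
        + ({n : ℕ | jmax < n} : Set ℕ).indicator (fun _ => (1 : ℝ)) (J ω) * g0 (W ω) := by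
    intro ω
    by_cases h : J ω ≤ jmax
    · rw [if_pos h]
      have h1 := hJ1 ω
      rw [Finset.sum_eq_single (J ω)]
      · have hindB : ({n : ℕ | jmax < n} : Set ℕ).indicator (fun _ => (1 : ℝ)) (J ω) = 0 :=
          Set.indicator_of_notMem (by simp only [Set.mem_setOf_eq]; omega) _
        have hindj : ({J ω} : Set ℕ).indicator (fun _ => (1 : ℝ)) (J ω) = 1 := by
          rw [Set.indicator_of_mem (show J ω ∈ ({J ω} : Set ℕ) from rfl)]
        rw [hindB, hindj, hgW (J ω) h1 h]
        ring
      · intro b _ hb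
        have hnm : J ω ∉ ({b} : Set ℕ) := by
          simp only [Set.mem_singleton_iff]
          exact fun hEq => hb hEq.symm
        rw [Set.indicator_of_notMem hnm, zero_mul]
      · intro hJmem
        exact absurd (Finset.mem_Icc.mpr ⟨h1, h⟩) hJmem
    · rw [if_neg h]
      push_neg at h
      have hsum : ∀ j ∈ Finset.Icc 1 jmax,
          ({j} : Set ℕ).indicator (fun _ => (1 : ℝ)) (J ω) * g j (W ω) = 0 := by
        intro j hj
        rw [Finset.mem_Icc] at hj
        have hnm : J ω ∉ ({j} : Set ℕ) := by
          simp only [Set.mem_singleton_iff]; omega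
        rw [Set.indicator_of_notMem hnm, zero_mul]
      rw [Finset.sum_congr rfl hsum]
      have hindB : ({n : ℕ | jmax < n} : Set ℕ).indicator (fun _ => (1 : ℝ)) (J ω) = 1 := by
        rw [Set.indicator_of_mem (show J ω ∈ {n : ℕ | jmax < n} from h)]
      rw [hindB, hg0W]
      simp
  -- integrability of each summand
  have hindint : ∀ j : ℕ, Integrable
      (fun ω => ({j} : Set ℕ).indicator (fun _ => (1 : ℝ)) (J ω) * g j (W ω)) μ := by
    intro j
    refine int_bdd (((measurable_const.indicator
      (Set.to_countable _).measurableSet).comp hJmeas).mul ((hgmeas j).comp hWmeas))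
      (C := (G + 2 ^ j * (2 * G)) ^ 2) fun ω => ?_
    rw [abs_mul]
    calc |({j} : Set ℕ).indicator (fun _ => (1 : ℝ)) (J ω)| * |g j (W ω)|
        ≤ 1 * |g j (W ω)| := by
          apply mul_le_mul_of_nonneg_right _ (abs_nonneg _)
          by_cases hmem : J ω ∈ ({j} : Set ℕ) <;> simp [Set.indicator, hmem]
      _ ≤ (G + 2 ^ j * (2 * G)) ^ 2 := by rw [one_mul]; exact hgWbd j ω
  have hindBint : Integrable
      (fun ω => ({n : ℕ | jmax < n} : Set ℕ).indicator (fun _ => (1 : ℝ)) (J ω) * g0 (W ω)) μ := by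
    refine int_bdd (((measurable_const.indicator
      (Set.to_countable _).measurableSet).comp hJmeas).mul (hg0meas.comp hWmeas))
      (C := G ^ 2) fun ω => ?_
    rw [abs_mul]
    calc |({n : ℕ | jmax < n} : Set ℕ).indicator (fun _ => (1 : ℝ)) (J ω)| * |g0 (W ω)|
        ≤ 1 * |g0 (W ω)| := by
          apply mul_le_mul_of_nonneg_right _ (abs_nonneg _)
          by_cases hmem : J ω ∈ {n : ℕ | jmax < n} <;> simp [Set.indicator, hmem]
      _ ≤ G ^ 2 := by rw [one_mul]; exact hg0Wbd ω
  -- expansion of ∫ g j ∘ W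
  have hIg : ∀ j : ℕ, 1 ≤ j → j ≤ jmax →
      ∫ ω, g j (W ω) ∂μ = I0 + 2 * 2 ^ j * C j + (2 : ℝ) ^ j * 2 ^ j * D j := by
    intro j h1 h2
    have hptwise : ∀ ω, g j (W ω) = ‖X 0 ω‖ ^ 2
        + 2 * 2 ^ j * ⟪X 0 ω, X j ω - X (j - 1) ω⟫
        + (2 : ℝ) ^ j * 2 ^ j * ‖X j ω - X (j - 1) ω‖ ^ 2 := by
      intro ω
      rw [hgW j h1 h2 ω, norm_add_sq_real, real_inner_smul_right, norm_smul]
      have h3 : ‖(2 : ℝ) ^ j‖ = 2 ^ j := by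
        rw [Real.norm_eq_abs, abs_of_pos (by positivity)]
      rw [h3, mul_pow]
      ring
    simp only [hI0def, hCdef, hDdef]
    simp_rw [hptwise]
    have e1 : ∫ ω, (‖X 0 ω‖ ^ 2 + 2 * 2 ^ j * ⟪X 0 ω, X j ω - X (j - 1) ω⟫
        + (2:ℝ) ^ j * 2 ^ j * ‖X j ω - X (j - 1) ω‖ ^ 2) ∂μ
        = (∫ ω, (‖X 0 ω‖ ^ 2 + 2 * 2 ^ j * ⟪X 0 ω, X j ω - X (j - 1) ω⟫) ∂μ)
          + ∫ ω, (2:ℝ) ^ j * 2 ^ j * ‖X j ω - X (j - 1) ω‖ ^ 2 ∂μ :=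
      integral_add (hI0int.add ((hCint j).const_mul _)) ((hDint j).const_mul _)
    rw [e1, integral_add hI0int ((hCint j).const_mul _), integral_const_mul, integral_const_mul]
  -- compute the full integral
  set pB : ℝ := (μ (J ⁻¹' {n : ℕ | jmax < n})).toReal with hpBdef
  have hsplit : ∫ ω, ‖X 0 ω +
      (if J ω ≤ jmax then (2 : ℝ) ^ (J ω) • (X (J ω) ω - X (J ω - 1) ω) else 0)‖ ^ 2 ∂μ
      = (∑ j ∈ Finset.Icc 1 jmax, p j * (I0 + 2 * 2 ^ j * C j + (2 : ℝ) ^ j * 2 ^ j * D j))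
        + pB * I0 := by
    calc ∫ ω, ‖X 0 ω +
        (if J ω ≤ jmax then (2 : ℝ) ^ (J ω) • (X (J ω) ω - X (J ω - 1) ω) else 0)‖ ^ 2 ∂μ
        = ∫ ω, ((∑ j ∈ Finset.Icc 1 jmax,
            ({j} : Set ℕ).indicator (fun _ => (1 : ℝ)) (J ω) * g j (W ω))
          + ({n : ℕ | jmax < n} : Set ℕ).indicator (fun _ => (1 : ℝ)) (J ω) * g0 (W ω)) ∂μ :=
          integral_congr_ae (Filter.Eventually.of_forall hdecomp)
      _ = (∑ j ∈ Finset.Icc 1 jmax,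
            ∫ ω, ({j} : Set ℕ).indicator (fun _ => (1 : ℝ)) (J ω) * g j (W ω) ∂μ)
          + ∫ ω, ({n : ℕ | jmax < n} : Set ℕ).indicator (fun _ => (1 : ℝ)) (J ω) * g0 (W ω) ∂μ := by
          rw [integral_add (integrable_finset_sum _ fun j _ => hindint j) hindBint,
            integral_finset_sum _ fun j _ => hindint j]
      _ = (∑ j ∈ Finset.Icc 1 jmax, p j * (I0 + 2 * 2 ^ j * C j + (2 : ℝ) ^ j * 2 ^ j * D j))
          + pB * I0 := by
          congr 1
          · apply Finset.sum_congr rfl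
            intro j hj
            rw [Finset.mem_Icc] at hj
            rw [key _ _ (hgmeas j) (hgWint j), hμj j hj.1, hIg j hj.1 hj.2]
          · rw [key _ _ hg0meas hg0Wint]
            have hg0I : ∫ ω, g0 (W ω) ∂μ = I0 := by
              rw [hI0def]
              exact integral_congr_ae (Filter.Eventually.of_forall hg0W)
            rw [hg0I, hpBdef]
  -- simplify each summand using p j * 2^j = 1
  have hsummand : ∀ j ∈ Finset.Icc 1 jmax,
      p j * (I0 + 2 * 2 ^ j * C j + (2 : ℝ) ^ j * 2 ^ j * D j)
        = p j * I0 + 2 * C j + 2 ^ j * D j := by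
    intro j _
    linear_combination (2 * C j + 2 ^ j * D j) * hp2 j
  -- coefficient bound
  have hcoef : (∑ j ∈ Finset.Icc 1 jmax, p j) + pB ≤ 1 := by
    have hdisj : (↑(Finset.Icc 1 jmax) : Set ℕ).PairwiseDisjoint
        (fun j => J ⁻¹' ({j} : Set ℕ)) := by
      intro a _ b _ hab
      simp only [Function.onFun]
      rw [Set.disjoint_left]
      intro ω ha hb'
      have h1 : J ω = a := ha
      have h2 : J ω = b := hb'
      exact hab (h1.symm.trans h2)
    have hmeasA : ∀ j ∈ Finset.Icc 1 jmax, MeasurableSet (J ⁻¹' ({j} : Set ℕ)) :=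
      fun j _ => hJmeas (Set.to_countable _).measurableSet
    have hunion : μ (⋃ j ∈ Finset.Icc 1 jmax, J ⁻¹' ({j} : Set ℕ))
        = ∑ j ∈ Finset.Icc 1 jmax, μ (J ⁻¹' ({j} : Set ℕ)) :=
      measure_biUnion_finset hdisj hmeasA
    have hdisjB : Disjoint (⋃ j ∈ Finset.Icc 1 jmax, J ⁻¹' ({j} : Set ℕ))
        (J ⁻¹' {n : ℕ | jmax < n}) := by
      rw [Set.disjoint_left]
      simp only [Set.mem_iUnion]
      rintro ω ⟨j, hj, hmem⟩ hmem'
      rw [Finset.mem_Icc] at hj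
      have h1 : J ω = j := hmem
      have h2 : jmax < J ω := hmem'
      omega
    have htot : μ (⋃ j ∈ Finset.Icc 1 jmax, J ⁻¹' ({j} : Set ℕ))
        + μ (J ⁻¹' {n : ℕ | jmax < n}) ≤ 1 := by
      rw [← measure_union hdisjB (hJmeas (Set.to_countable _).measurableSet)]
      calc μ _ ≤ μ Set.univ := measure_mono (Set.subset_univ _)
        _ = 1 := measure_univ
    rw [hunion] at htot
    have hne : ∀ j ∈ Finset.Icc 1 jmax, μ (J ⁻¹' ({j} : Set ℕ)) ≠ ⊤ :=
      fun j _ => measure_ne_top _ _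
    have h1 : ((∑ j ∈ Finset.Icc 1 jmax, μ (J ⁻¹' ({j} : Set ℕ)))
        + μ (J ⁻¹' {n : ℕ | jmax < n})).toReal ≤ (1 : ENNReal).toReal :=
      ENNReal.toReal_mono ENNReal.one_ne_top htot
    rw [ENNReal.toReal_add (ENNReal.sum_ne_top.mpr hne) (measure_ne_top _ _),
      ENNReal.toReal_sum hne, ENNReal.toReal_one] at h1
    have hs_eq : ∑ j ∈ Finset.Icc 1 jmax, (μ (J ⁻¹' ({j} : Set ℕ))).toReal
        = ∑ j ∈ Finset.Icc 1 jmax, p j := by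
      apply Finset.sum_congr rfl
      intro j hj
      rw [Finset.mem_Icc] at hj
      exact hμj j hj.1
    rw [hs_eq] at h1
    exact h1
  -- telescoping cross term
  have hCsum : ∑ j ∈ Finset.Icc 1 jmax, C j = ∫ ω, ⟪X 0 ω, X jmax ω - X 0 ω⟫ ∂μ := by
    simp only [hCdef]
    rw [← integral_finset_sum _ fun j _ => hCint j]
    apply integral_congr_ae
    apply Filter.Eventually.of_forall
    intro ω
    have hswap : ∀ j : ℕ, ⟪X 0 ω, X j ω - X (j - 1) ω⟫
        = (fun k => ⟪X 0 ω, X k ω⟫) j - (fun k => ⟪X 0 ω, X k ω⟫) (j - 1) := by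
      intro j; simp [inner_sub_right]
    simp_rw [hswap]
    rw [telescope_sum (fun k => ⟪X 0 ω, X k ω⟫) jmax]
    simp [inner_sub_right]
  -- cross-term + I0 bound
  have hcrossint : Integrable (fun ω => ⟪X 0 ω, X jmax ω - X 0 ω⟫) μ := by
    refine hinint _ _ G (2 * G) (hXmeas 0) ((hXmeas jmax).sub (hXmeas 0)) (hXbd 0) fun ω => ?_
    calc ‖X jmax ω - X 0 ω‖ ≤ ‖X jmax ω‖ + ‖X 0 ω‖ := norm_sub_le _ _
      _ ≤ 2 * G := by have := hXbd jmax ω; have := hXbd 0 ω; linarith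
  have hXjmaxint : Integrable (fun ω => ‖X jmax ω‖ ^ 2) μ := hsqint _ G (hXmeas jmax) (hXbd jmax)
  have hA : ((∑ j ∈ Finset.Icc 1 jmax, p j) + pB) * I0
      + 2 * ∫ ω, ⟪X 0 ω, X jmax ω - X 0 ω⟫ ∂μ ≤ G ^ 2 := by
    have heq : ((∑ j ∈ Finset.Icc 1 jmax, p j) + pB) * I0
        + 2 * ∫ ω, ⟪X 0 ω, X jmax ω - X 0 ω⟫ ∂μ
        = ∫ ω, (((∑ j ∈ Finset.Icc 1 jmax, p j) + pB) * ‖X 0 ω‖ ^ 2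
          + 2 * ⟪X 0 ω, X jmax ω - X 0 ω⟫) ∂μ := by
      rw [integral_add (hI0int.const_mul _) (hcrossint.const_mul _),
        integral_const_mul, integral_const_mul, hI0def]
    rw [heq]
    have hstep : ∫ ω, (((∑ j ∈ Finset.Icc 1 jmax, p j) + pB) * ‖X 0 ω‖ ^ 2
        + 2 * ⟪X 0 ω, X jmax ω - X 0 ω⟫) ∂μ ≤ ∫ ω, ‖X jmax ω‖ ^ 2 ∂μ := by
      apply integral_mono ((hI0int.const_mul _).add (hcrossint.const_mul _)) hXjmaxint
      intro ω
      show ((∑ j ∈ Finset.Icc 1 jmax, p j) + pB) * ‖X 0 ω‖ ^ 2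
        + 2 * ⟪X 0 ω, X jmax ω - X 0 ω⟫ ≤ ‖X jmax ω‖ ^ 2
      have e1 : ⟪X 0 ω, X jmax ω - X 0 ω⟫ = ⟪X 0 ω, X jmax ω⟫ - ‖X 0 ω‖ ^ 2 := by
        rw [inner_sub_right, real_inner_self_eq_norm_sq]
      have e2 : ‖X jmax ω - X 0 ω‖ ^ 2
          = ‖X jmax ω‖ ^ 2 - 2 * ⟪X jmax ω, X 0 ω⟫ + ‖X 0 ω‖ ^ 2 := norm_sub_sq_real _ _
      have e3 : ⟪X 0 ω, X jmax ω⟫ = ⟪X jmax ω, X 0 ω⟫ := real_inner_comm _ _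
      have e4 : (0:ℝ) ≤ ‖X jmax ω - X 0 ω‖ ^ 2 := sq_nonneg _
      have e5 : (0:ℝ) ≤ ‖X 0 ω‖ ^ 2 := sq_nonneg _
      nlinarith [mul_nonneg (sub_nonneg.mpr hcoef) e5]
    have hlast : ∫ ω, ‖X jmax ω‖ ^ 2 ∂μ ≤ G ^ 2 := by
      calc ∫ ω, ‖X jmax ω‖ ^ 2 ∂μ ≤ ∫ _ω, G ^ 2 ∂μ := by
            apply integral_mono hXjmaxint (integrable_const _)
            intro ω
            exact pow_le_pow_left₀ (norm_nonneg _) (hXbd jmax ω) 2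
        _ = G ^ 2 := by simp
    linarith
  have hA' : (∑ j ∈ Finset.Icc 1 jmax, p j) * I0 + pB * I0
      + 2 * ∫ ω, ⟪X 0 ω, X jmax ω - X 0 ω⟫ ∂μ ≤ G ^ 2 := by
    rw [add_mul] at hA
    linarith
  -- variance bound
  have hB : ∑ j ∈ Finset.Icc 1 jmax, (2 : ℝ) ^ j * D j ≤ 6 * jmax * V := by
    have hterm : ∀ j ∈ Finset.Icc 1 jmax, (2 : ℝ) ^ j * D j ≤ 6 * V := by
      intro j hj
      rw [Finset.mem_Icc] at hj
      obtain ⟨k, rfl⟩ : ∃ k, j = k + 1 := ⟨j - 1, by omega⟩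
      have hμu : ∀ ℓ : ℕ, Integrable (fun ω => ‖X ℓ ω - μvec‖ ^ 2) μ := by
        intro ℓ
        refine hsqint _ (2 * G) ((hXmeas ℓ).sub measurable_const) fun ω => ?_
        calc ‖X ℓ ω - μvec‖ ≤ ‖X ℓ ω‖ + ‖μvec‖ := norm_sub_le _ _
          _ ≤ 2 * G := by have := hXbd ℓ ω; linarith
      have hDj : D (k + 1) ≤ 2 * (V / 2 ^ (k + 1)) + 2 * (V / 2 ^ k) := by
        have hmono : D (k + 1) ≤ ∫ ω, (2 * ‖X (k + 1) ω - μvec‖ ^ 2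
            + 2 * ‖X k ω - μvec‖ ^ 2) ∂μ := by
          rw [hDdef]
          apply integral_mono (hDint (k + 1)) (((hμu (k+1)).const_mul _).add ((hμu k).const_mul _))
          intro ω
          show ‖X (k + 1) ω - X (k + 1 - 1) ω‖ ^ 2
            ≤ 2 * ‖X (k + 1) ω - μvec‖ ^ 2 + 2 * ‖X k ω - μvec‖ ^ 2
          have hrw : X (k + 1) ω - X (k + 1 - 1) ω
              = (X (k + 1) ω - μvec) - (X k ω - μvec) := by
            simp only [Nat.add_sub_cancel]; abel
          have hle : ‖X (k + 1) ω - X (k + 1 - 1) ω‖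
              ≤ ‖X (k + 1) ω - μvec‖ + ‖X k ω - μvec‖ := by
            rw [hrw]; exact norm_sub_le _ _
          have h1 : ‖X (k + 1) ω - X (k + 1 - 1) ω‖ ^ 2
              ≤ (‖X (k + 1) ω - μvec‖ + ‖X k ω - μvec‖) ^ 2 :=
            pow_le_pow_left₀ (norm_nonneg _) hle 2
          nlinarith [sq_nonneg (‖X (k + 1) ω - μvec‖ - ‖X k ω - μvec‖)]
        have hint : ∫ ω, (2 * ‖X (k + 1) ω - μvec‖ ^ 2 + 2 * ‖X k ω - μvec‖ ^ 2) ∂μ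
            = 2 * ∫ ω, ‖X (k + 1) ω - μvec‖ ^ 2 ∂μ + 2 * ∫ ω, ‖X k ω - μvec‖ ^ 2 ∂μ := by
          rw [integral_add ((hμu (k+1)).const_mul _) ((hμu k).const_mul _),
            integral_const_mul, integral_const_mul]
        rw [hint] at hmono
        have hv1 := hvar (k + 1) hj.2
        have hv2 := hvar k (by omega)
        linarith
      have h2k : (0:ℝ) < 2 ^ k := by positivity
      have hval : (2:ℝ) ^ (k + 1) * (2 * (V / 2 ^ (k + 1)) + 2 * (V / 2 ^ k)) = 6 * V := by
        rw [pow_succ]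
        field_simp
        ring
      calc (2:ℝ) ^ (k + 1) * D (k + 1)
          ≤ (2:ℝ) ^ (k + 1) * (2 * (V / 2 ^ (k + 1)) + 2 * (V / 2 ^ k)) :=
            mul_le_mul_of_nonneg_left hDj (by positivity)
        _ = 6 * V := hval
    calc ∑ j ∈ Finset.Icc 1 jmax, (2 : ℝ) ^ j * D j
        ≤ ∑ _j ∈ Finset.Icc 1 jmax, 6 * V := Finset.sum_le_sum hterm
      _ = jmax * (6 * V) := by
          rw [Finset.sum_const, Nat.card_Icc]
          simp [nsmul_eq_mul]
      _ = 6 * jmax * V := by ring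
  -- putting it together
  rw [hsplit, Finset.sum_congr rfl hsummand]
  rw [Finset.sum_add_distrib, Finset.sum_add_distrib, ← Finset.sum_mul, ← Finset.mul_sum, hCsum]
  have hjV : (0:ℝ) ≤ (jmax:ℝ) * V := by positivity
  have hG2 : (0:ℝ) ≤ G ^ 2 := sq_nonneg _
  nlinarith [hA', hB, hjV, hG2]
end
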